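/- arXiv:1409.2249 — 7 statements merged into one kernel-verified Lean document; each statement's English description precedes it below -/
import Mathlib

section
/- If Q is a connected rack, then the derived (commutator) subgroup of RMlt(Q) equals Dis(Q). -/
variable {Q : Type*}

/-- The right multiplication group of a rack: generated by all right translations. -/
def RMlt (R : Q → Equiv.Perm Q) : Subgroup (Equiv.Perm Q) :=
  Subgroup.closure (Set.range R)

/-- The group of displacements of a rack: generated by all `(R a)⁻¹ * R b`. -/
def Dis (R : Q → Equiv.Perm Q) : Subgroup (Equiv.Perm Q) :=
  Subgroup.closure {f : Equiv.Perm Q | ∃ a b : Q, f = (R a)⁻¹ * R b}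

section Aux

variable (op : Q → Q → Q) (R : Q → Equiv.Perm Q)

/-- Every element of `RMlt R` is a rack automorphism. -/
lemma rmlt_aut (hrack : ∀ x a b, R x (op a b) = op (R x a) (R x b)) :
    ∀ g ∈ RMlt R, ∀ u v, g (op u v) = op (g u) (g v) := by
  intro g hg
  refine Subgroup.closure_induction (fun x hx => ?_) (fun u v => rfl)
    (fun x y _ _ ihx ihy u v => ?_) (fun x _ ihx u v => ?_) hg
  · obtain ⟨c, rfl⟩ := hx
    exact fun u v => hrack c u v
  · simp only [Equiv.Perm.mul_apply]
    rw [ihy, ihx]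
  · have := ihx (x⁻¹ u) (x⁻¹ v)
    simp only [Equiv.Perm.coe_inv, Equiv.apply_symm_apply] at this
    simp only [← this, Equiv.Perm.coe_inv, Equiv.symm_apply_apply]

/-- Conjugation formula: `g * R a * g⁻¹ = R (g a)` for automorphisms `g`. -/
lemma conj_R (hR : ∀ x y, R x y = op y x)
    (g : Equiv.Perm Q) (hg : ∀ u v, g (op u v) = op (g u) (g v)) (a : Q) :
    g * R a * g⁻¹ = R (g a) := by
  ext y
  simp only [Equiv.Perm.mul_apply, hR]
  rw [hg, Equiv.Perm.coe_inv, Equiv.apply_symm_apply]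

/-- `Dis R` is normalized by `RMlt R`. -/
lemma dis_normal (hR : ∀ x y, R x y = op y x)
    (hrack : ∀ x a b, R x (op a b) = op (R x a) (R x b)) :
    ∀ g ∈ RMlt R, ∀ d ∈ Dis R, g * d * g⁻¹ ∈ Dis R := by
  intro g hg d hd
  have haut := rmlt_aut op R hrack g hg
  refine Subgroup.closure_induction (fun x hx => ?_) (by simpa using one_mem _)
    (fun x y _ _ ihx ihy => ?_) (fun x _ ihx => ?_) hd
  · obtain ⟨a, b, rfl⟩ := hx
    have : g * ((R a)⁻¹ * R b) * g⁻¹ = (g * R a * g⁻¹)⁻¹ * (g * R b * g⁻¹) := by group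
    rw [this, conj_R op R hR g haut, conj_R op R hR g haut]
    exact Subgroup.subset_closure ⟨g a, g b, rfl⟩
  · have : g * (x * y) * g⁻¹ = (g * x * g⁻¹) * (g * y * g⁻¹) := by group
    rw [this]; exact mul_mem ihx ihy
  · have : g * x⁻¹ * g⁻¹ = (g * x * g⁻¹)⁻¹ := by group
    rw [this]; exact inv_mem ihx

/-- Decomposition of elements of `RMlt R` relative to a base point. -/
lemma rmlt_decomp (hR : ∀ x y, R x y = op y x)
    (hrack : ∀ x a b, R x (op a b) = op (R x a) (R x b)) (a : Q) :
    ∀ g ∈ RMlt R, ∃ n : ℤ, ∃ d ∈ Dis R, g = (R a) ^ n * d := by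
  intro g hg
  have hRa : R a ∈ RMlt R := Subgroup.subset_closure ⟨a, rfl⟩
  have hnorm := dis_normal op R hR hrack
  refine Subgroup.closure_induction (fun x hx => ?_) ⟨0, 1, one_mem _, by simp⟩
    (fun x y _ _ ihx ihy => ?_) (fun x hx ihx => ?_) hg
  · obtain ⟨b, rfl⟩ := hx
    exact ⟨1, (R a)⁻¹ * R b, Subgroup.subset_closure ⟨a, b, rfl⟩, by group⟩
  · obtain ⟨n, d, hd, rfl⟩ := ihx
    obtain ⟨m, e, he, rfl⟩ := ihy
    refine ⟨n + m, ((R a) ^ (-m) * d * ((R a) ^ (-m))⁻¹) * e,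
      mul_mem (hnorm _ (zpow_mem hRa _) d hd) he, ?_⟩
    rw [zpow_add]; group
  · obtain ⟨n, d, hd, rfl⟩ := ihx
    refine ⟨-n, (R a) ^ n * d⁻¹ * ((R a) ^ n)⁻¹,
      hnorm _ (zpow_mem hRa _) d⁻¹ (inv_mem hd), ?_⟩
    group

end Aux

open scoped commutatorElement

/-- If `Q` is a connected rack, then `RMlt(Q)' = Dis(Q)`. -/
theorem stmt4 (op : Q → Q → Q) (R : Q → Equiv.Perm Q)
    (hR : ∀ x y, R x y = op y x)
    (hrack : ∀ x a b, R x (op a b) = op (R x a) (R x b))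
    (hconn : ∀ x y : Q, ∃ g ∈ RMlt R, g x = y) :
    ⁅RMlt R, RMlt R⁆ = Dis R := by
  rcases isEmpty_or_nonempty Q with hQ | ⟨⟨a⟩⟩
  · have : Subsingleton (Equiv.Perm Q) := by
      constructor; intro f g; ext x; exact hQ.elim x
    exact Subsingleton.elim _ _
  have hnorm := dis_normal op R hR hrack
  have hRa : R a ∈ RMlt R := Subgroup.subset_closure ⟨a, rfl⟩
  apply le_antisymm
  · rw [Subgroup.commutator_le]
    intro g hg h hh
    obtain ⟨n, d, hd, rfl⟩ := rmlt_decomp op R hR hrack a g hg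
    obtain ⟨m, e, he, rfl⟩ := rmlt_decomp op R hR hrack a h hh
    set A := R a with hA
    have key : ⁅A ^ n * d, A ^ m * e⁆ =
        (A ^ n * (d * (A ^ m * e) * d⁻¹ * (A ^ m * e)⁻¹) * (A ^ n)⁻¹) *
        (A ^ n * A ^ m * (e * (A ^ n)⁻¹ * e⁻¹ * A ^ n) * (A ^ n * A ^ m)⁻¹) := by
      rw [commutatorElement_def]; group
    rw [key]
    have hAn : (A : Equiv.Perm Q) ^ n ∈ RMlt R := zpow_mem hRa _
    have hAm : (A : Equiv.Perm Q) ^ m ∈ RMlt R := zpow_mem hRa _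
    have hAnm : (A : Equiv.Perm Q) ^ n * A ^ m ∈ RMlt R := mul_mem hAn hAm
    have h1 : d * (A ^ m * e) * d⁻¹ * (A ^ m * e)⁻¹ ∈ Dis R := by
      have hDle : Dis R ≤ RMlt R := by
        rw [Dis, Subgroup.closure_le]
        rintro f ⟨u, v, rfl⟩
        exact mul_mem (inv_mem (Subgroup.subset_closure ⟨u, rfl⟩))
          (Subgroup.subset_closure ⟨v, rfl⟩)
      have hh' : A ^ m * e ∈ RMlt R := mul_mem hAm (hDle he)
      have := hnorm _ hh' d⁻¹ (inv_mem hd)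
      have heq : d * (A ^ m * e) * d⁻¹ * (A ^ m * e)⁻¹ =
          d * ((A ^ m * e) * d⁻¹ * (A ^ m * e)⁻¹) := by group
      rw [heq]
      exact mul_mem hd this
    have h2 : e * (A ^ n)⁻¹ * e⁻¹ * A ^ n ∈ Dis R := by
      have hAni : (A : Equiv.Perm Q) ^ (-n) = (A ^ n)⁻¹ := by group
      have := hnorm _ (inv_mem hAn) e⁻¹ (inv_mem he)
      have heq : e * (A ^ n)⁻¹ * e⁻¹ * A ^ n =
          e * ((A ^ n)⁻¹ * e⁻¹ * ((A ^ n)⁻¹)⁻¹) := by group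
      rw [heq]
      exact mul_mem he this
    exact mul_mem (hnorm _ hAn _ h1) (hnorm _ hAnm _ h2)
  · rw [Dis, Subgroup.closure_le]
    rintro f ⟨u, v, rfl⟩
    obtain ⟨g, hg, hgu⟩ := hconn u v
    have haut := rmlt_aut op R hrack g hg
    have hconj : g * R u * g⁻¹ = R v := by
      rw [conj_R op R hR g haut u, hgu]
    have hRu : R u ∈ RMlt R := Subgroup.subset_closure ⟨u, rfl⟩
    have : (R u)⁻¹ * R v = ⁅(R u)⁻¹, g⁆ := by
      rw [commutatorElement_def, ← hconj]; group
    rw [this]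
    exact Subgroup.commutator_mem_commutator (inv_mem hRu) hg
end

section
/- For a rack Q, the group Dis(Q) is abelian if and only if Q is medial, i.e., satisfies (x·y)·(u·v) = (x·u)·(y·v) for all x, y, u, v. -/
variable {Q : Type*}

/-- The closure of a pairwise-commuting set is commutative. -/
lemma closure_comm {G : Type*} [Group G] {s : Set G}
    (hs : ∀ a ∈ s, ∀ b ∈ s, Commute a b) :
    ∀ g ∈ Subgroup.closure s, ∀ h ∈ Subgroup.closure s, Commute g h := by
  intro g hg h hh
  refine Subgroup.closure_induction₂ (p := fun x y _ _ => Commute x y)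
    (fun x y hx hy => hs x hx y hy)
    (fun x _ => Commute.one_left x) (fun x _ => Commute.one_right x)
    (fun x y z _ _ _ h1 h2 => h1.mul_left h2)
    (fun y z x _ _ _ h1 h2 => h1.mul_right h2)
    (fun x y _ _ h1 => h1.inv_left)
    (fun x y _ _ h1 => h1.inv_right) hg hh

/-- For a rack `Q`, `Dis(Q)` is abelian iff `Q` is medial. -/
theorem stmt6 (op : Q → Q → Q) (R : Q → Equiv.Perm Q)
    (hR : ∀ x y, R x y = op y x)
    (hrack : ∀ x a b, R x (op a b) = op (R x a) (R x b)) :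
    (∀ g ∈ Dis R, ∀ h ∈ Dis R, g * h = h * g) ↔
      (∀ x y u v : Q, op (op x y) (op u v) = op (op x u) (op y v)) := by
  have hsd : ∀ x a b, op (op a b) x = op (op a x) (op b x) := by
    intro x a b
    have := hrack x a b
    simpa [hR] using this
  have hconj : ∀ v u, R (R v u) = R v * R u * (R v)⁻¹ := by
    intro v u
    rw [eq_mul_inv_iff_mul_eq]
    ext a
    simp only [Equiv.Perm.mul_apply, hR]
    exact (hsd v a u).symm
  -- medial in terms of R at a point
  have hform : ∀ x y u v : Q,
      (op (op x y) (op u v) = op (op x u) (op y v)) ↔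
        (R u ((R v)⁻¹ (R y x)) = R y ((R v)⁻¹ (R u x))) := by
    intro x y u v
    have h1 : op (op x y) (op u v) = R v (R u ((R v)⁻¹ (R y x))) := by
      have : op (op x y) (op u v) = R (R v u) (R y x) := by simp [hR]
      rw [this, hconj]
      simp [Equiv.Perm.mul_apply]
    have h2 : op (op x u) (op y v) = R v (R y ((R v)⁻¹ (R u x))) := by
      have : op (op x u) (op y v) = R (R v y) (R u x) := by simp [hR]
      rw [this, hconj]
      simp [Equiv.Perm.mul_apply]
    rw [h1, h2]
    exact ⟨fun h => (R v).injective h, fun h => congrArg (R v) h⟩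
  constructor
  · intro habel x y u v
    have hu : (R v)⁻¹ * R u ∈ Dis R := Subgroup.subset_closure ⟨v, u, rfl⟩
    have hy : (R v)⁻¹ * R y ∈ Dis R := Subgroup.subset_closure ⟨v, y, rfl⟩
    have h1 := habel _ hu _ hy
    rw [hform]
    have h2 := DFunLike.congr_fun h1 x
    simp only [Equiv.Perm.mul_apply] at h2
    exact (Equiv.injective _) h2
  · intro hmed
    have hsame : ∀ v u y : Q, Commute ((R v)⁻¹ * R u) ((R v)⁻¹ * R y) := by
      intro v u y
      unfold Commute SemiconjBy
      ext x
      simp only [Equiv.Perm.mul_apply]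
      apply congrArg
      exact (hform x y u v).mp (hmed x y u v)
    have hcross : ∀ f ∈ {f : Equiv.Perm Q | ∃ a b : Q, f = (R a)⁻¹ * R b},
        ∀ g ∈ {f : Equiv.Perm Q | ∃ a b : Q, f = (R a)⁻¹ * R b}, Commute f g := by
      rintro _ ⟨a, b, rfl⟩ _ ⟨c, d, rfl⟩
      have hrw : (R c)⁻¹ * R d = ((R a)⁻¹ * R c)⁻¹ * ((R a)⁻¹ * R d) := by group
      rw [hrw]
      exact ((hsame a b c).inv_right).mul_right (hsame a b d)
    exact fun g hg h hh => closure_comm hcross g hg h hh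
end

section
/- Let (Q,·) be a connected quandle and e ∈ Q. Then the pair (RMlt(Q), R_e) is a quandle envelope: R_e lies in the center of the stabilizer of e in G = RMlt(Q), and the normal closure of R_e in G is all of G. -/
variable {Q : Type*}

/-- For a connected quandle `(Q,·)` and `e ∈ Q`, the pair `(RMlt(Q), R_e)` is a quandle
envelope: `R_e` lies in the center of the stabilizer of `e` in `G = RMlt(Q)`, and the
normal closure of `R_e` in `G` is all of `G`. -/
theorem stmt11 (op : Q → Q → Q) (R : Q → Equiv.Perm Q)
    (hR : ∀ x y, R x y = op y x)
    (hidem : ∀ x, op x x = x)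
    (hrack : ∀ x a b, R x (op a b) = op (R x a) (R x b))
    (hconn : ∀ x y : Q, ∃ g ∈ RMlt R, g x = y)
    (e : Q) :
    R e ∈ RMlt R ∧ (R e) e = e ∧
    (∀ g ∈ RMlt R, g e = e → g * R e = R e * g) ∧
    Subgroup.closure {f : Equiv.Perm Q | ∃ g ∈ RMlt R, f = g * R e * g⁻¹} = RMlt R := by
  have hmem : ∀ x, R x ∈ RMlt R := fun x => Subgroup.subset_closure ⟨x, rfl⟩
  -- key: conjugation formula
  have hconj : ∀ g ∈ RMlt R, ∀ x, g * R x * g⁻¹ = R (g x) := by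
    intro g hg
    refine Subgroup.closure_induction ?_ ?_ ?_ ?_ hg
    · rintro f ⟨y, rfl⟩ x
      ext a
      simp only [Equiv.Perm.coe_mul, Function.comp_apply]
      have : R x ((R y)⁻¹ a) = op ((R y)⁻¹ a) x := hR x _
      rw [this, hrack, ← hR, show (R y) ((R y)⁻¹ a) = a from Equiv.apply_symm_apply (R y) a]
    · intro x; simp
    · intro f h hf hh ihf ihh x
      have : f * h * R x * (f * h)⁻¹ = f * (h * R x * h⁻¹) * f⁻¹ := by
        group
      rw [this, ihh, ihf]
      rfl
    · intro f hf ihf x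
      have h1 := ihf (f⁻¹ x)
      have h2 : (f : Equiv.Perm Q) (f⁻¹ x) = x := Equiv.apply_symm_apply f x
      rw [h2] at h1
      have : f⁻¹ * R x * f⁻¹⁻¹ = f⁻¹ * (f * R (f⁻¹ x) * f⁻¹) * f⁻¹⁻¹ := by rw [h1]
      rw [this]; group
  refine ⟨hmem e, by rw [hR, hidem], ?_, ?_⟩
  · intro g hg hge
    have := hconj g hg e
    rw [hge] at this
    calc g * R e = (g * R e * g⁻¹) * g := by group
    _ = R e * g := by rw [this]
  · apply le_antisymm
    · rw [Subgroup.closure_le]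
      rintro f ⟨g, hg, rfl⟩
      exact mul_mem (mul_mem hg (hmem e)) (inv_mem hg)
    · rw [RMlt, Subgroup.closure_le]
      rintro f ⟨x, rfl⟩
      obtain ⟨g, hg, hgx⟩ := hconn e x
      have : R x = g * R e * g⁻¹ := by rw [hconj g hg e, hgx]
      exact Subgroup.subset_closure ⟨g, hg, this⟩
end

section
/- Let (G,ζ) be a quandle folder on a set Q with basepoint e (G transitive on Q, ζ ∈ Z(G_e)). If α, β ∈ G satisfy e^α = e^β, then ζ^α = ζ^β (conjugates of ζ agree). Consequently, the operation x ∘ y = x^{ζ^{ŷ}}, where ŷ ∈ G is any element with e^{ŷ} = y, is well defined, and (Q,∘) is a quandle. -/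
/-- Let `(G,ζ)` be a quandle folder on `(Q,e)`: `G ≤ Sym(Q)` transitive and
`ζ ∈ Z(G_e)`. If `α, β ∈ G` satisfy `e^α = e^β` then `ζ^α = ζ^β`; consequently the
operation `x ∘ y = x^{ζ^{ŷ}}` (where `e^{ŷ} = y`) is well defined and `(Q,∘)` is a
quandle. -/
theorem stmt12 {Q : Type*} (e : Q) (G : Subgroup (Equiv.Perm Q)) (ζ : Equiv.Perm Q)
    (hζ : ζ ∈ G) (hfix : ζ e = e)
    (htrans : ∀ x : Q, ∃ g ∈ G, g e = x)
    (hcen : ∀ g ∈ G, g e = e → g * ζ = ζ * g) :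
    (∀ α ∈ G, ∀ β ∈ G, α e = β e → α * ζ * α⁻¹ = β * ζ * β⁻¹) ∧
    ∃ op : Q → Q → Q,
      (∀ x y : Q, ∀ g ∈ G, g e = y → op x y = (g * ζ * g⁻¹) x) ∧
      (∀ x, op x x = x) ∧
      (∀ y a b, op (op a b) y = op (op a y) (op b y)) ∧
      (∀ y, Function.Bijective fun x => op x y) := by
  have key : ∀ α ∈ G, ∀ β ∈ G, α e = β e → α * ζ * α⁻¹ = β * ζ * β⁻¹ := by
    intro α hα β hβ h
    have hmem : β⁻¹ * α ∈ G := mul_mem (inv_mem hβ) hα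
    have hfixe : (β⁻¹ * α) e = e := by
      simp [Equiv.Perm.mul_apply, h]
    have hc := hcen _ hmem hfixe
    have h2 : β * (β⁻¹ * α * ζ) * α⁻¹ = β * (ζ * (β⁻¹ * α)) * α⁻¹ := by rw [hc]
    group at h2
    convert h2 using 1 <;> rw [zpow_neg_one]
  refine ⟨key, ?_⟩
  choose g hgG hge using htrans
  refine ⟨fun x y => (g y * ζ * (g y)⁻¹) x, ?_, ?_, ?_, ?_⟩
  · intro x y k hk hke
    have := key (g y) (hgG y) k hk (by rw [hge, hke])
    show (g y * ζ * (g y)⁻¹) x = _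
    rw [this]
  · intro x
    have hinv : (g x)⁻¹ x = e := by
      rw [Equiv.Perm.inv_def, Equiv.symm_apply_eq, hge]
    show (g x * ζ * (g x)⁻¹) x = x
    simp [Equiv.Perm.mul_apply, hinv, hfix, hge]
  · intro y a b
    set σ := g y * ζ * (g y)⁻¹ with hσ
    have hσG : σ ∈ G := mul_mem (mul_mem (hgG y) hζ) (inv_mem (hgG y))
    have := key (σ * g b) (mul_mem hσG (hgG b)) (g (σ b)) (hgG _)
      (by simp [Equiv.Perm.mul_apply, hge])
    beta_reduce
    rw [← hσ, ← this]
    simp [Equiv.Perm.mul_apply]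
  · intro y
    exact (g y * ζ * (g y)⁻¹).bijective
end

section
/- Let (G,ζ) be a quandle envelope on (Q,e), i.e., G ≤ Sym(Q) transitive, ζ ∈ Z(G_e), and ⟨ζ^G⟩ = G. Then the quandle Q(G,ζ) with operation x ∘ y = x^{ζ^{ŷ}} (where e^{ŷ} = y) satisfies RMlt(Q(G,ζ)) = G, and in particular Q(G,ζ) is a connected quandle. -/
/-- Let `(G,ζ)` be a quandle envelope on `(Q,e)`. Then the quandle `Q(G,ζ)` with
operation `x ∘ y = x^{ζ^{ŷ}}` satisfies `RMlt(Q(G,ζ)) = G`; in particular it is a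
connected quandle. -/
theorem stmt13 {Q : Type*} (e : Q) (G : Subgroup (Equiv.Perm Q)) (ζ : Equiv.Perm Q)
    (hζ : ζ ∈ G) (hfix : ζ e = e)
    (htrans : ∀ x : Q, ∃ g ∈ G, g e = x)
    (hcen : ∀ g ∈ G, g e = e → g * ζ = ζ * g)
    (hgen : Subgroup.closure {f : Equiv.Perm Q | ∃ g ∈ G, f = g * ζ * g⁻¹} = G)
    (op : Q → Q → Q)
    (hop : ∀ x y : Q, ∀ g ∈ G, g e = y → op x y = (g * ζ * g⁻¹) x) :
    Subgroup.closure {f : Equiv.Perm Q | ∃ y : Q, ∀ x, f x = op x y} = G ∧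
    (∀ x y : Q, ∃ h ∈ Subgroup.closure {f : Equiv.Perm Q | ∃ y : Q, ∀ x, f x = op x y},
      h x = y) := by
  have hset : {f : Equiv.Perm Q | ∃ y : Q, ∀ x, f x = op x y}
      = {f : Equiv.Perm Q | ∃ g ∈ G, f = g * ζ * g⁻¹} := by
    ext f
    constructor
    · rintro ⟨y, hy⟩
      obtain ⟨g, hg, hge⟩ := htrans y
      exact ⟨g, hg, Equiv.ext fun x => (hy x).trans (hop x y g hg hge)⟩
    · rintro ⟨g, hg, rfl⟩
      exact ⟨g e, fun x => (hop x (g e) g hg rfl).symm⟩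
  have hG : Subgroup.closure {f : Equiv.Perm Q | ∃ y : Q, ∀ x, f x = op x y} = G := by
    rw [hset, hgen]
  refine ⟨hG, fun x y => ?_⟩
  obtain ⟨g, hg, hgx⟩ := htrans x
  obtain ⟨h, hh, hhy⟩ := htrans y
  refine ⟨h * g⁻¹, hG ▸ mul_mem hh (inv_mem hg), ?_⟩
  simp [← hgx, hhy]
end

section
/- The maps E : (Q,·) ↦ (RMlt(Q,·), R_e) and Q : (G,ζ) ↦ (Q,∘) with x ∘ y = x^{ζ^{ŷ}} are mutually inverse bijections between the set of connected quandle structures on a fixed pointed set (Q,e) and the set of quandle envelopes on (Q,e). -/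
/-- A connected quandle structure on a set `Q`. -/
structure ConnQuandle (Q : Type*) where
  op : Q → Q → Q
  R : Q → Equiv.Perm Q
  hR : ∀ x y, R x y = op y x
  idem : ∀ x, op x x = x
  auto : ∀ x a b, R x (op a b) = op (R x a) (R x b)
  conn : ∀ x y : Q, ∃ g ∈ Subgroup.closure (Set.range R), g x = y

/-- A quandle envelope on a pointed set `(Q,e)`: a transitive `G ≤ Sym(Q)` together
with `ζ ∈ Z(G_e)` whose normal closure in `G` is all of `G`. -/
structure QEnvelope (Q : Type*) (e : Q) where
  G : Subgroup (Equiv.Perm Q)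
  ζ : Equiv.Perm Q
  mem : ζ ∈ G
  fix : ζ e = e
  trans : ∀ x : Q, ∃ g ∈ G, g e = x
  central : ∀ g ∈ G, g e = e → g * ζ = ζ * g
  gen : Subgroup.closure {f : Equiv.Perm Q | ∃ g ∈ G, f = g * ζ * g⁻¹} = G

theorem Equiv.Perm.inv_apply_self {α : Type*} (g : Equiv.Perm α) (x : α) : g⁻¹ (g x) = x :=
  Equiv.Perm.inv_eq_iff_eq.mpr rfl

theorem Equiv.Perm.apply_inv_self {α : Type*} (g : Equiv.Perm α) (x : α) : g (g⁻¹ x) = x :=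
  (Equiv.eq_symm_apply g).mp rfl

namespace Stmt14Aux

variable {Q : Type*}

lemma connQuandle_ext {C D : ConnQuandle Q} (h1 : C.op = D.op) (h2 : C.R = D.R) :
    C = D := by
  cases C; cases D; cases h1; cases h2; rfl

lemma qEnvelope_ext {e : Q} {A B : QEnvelope Q e} (h1 : A.G = B.G) (h2 : A.ζ = B.ζ) :
    A = B := by
  cases A; cases B; cases h1; cases h2; rfl

/-- Key conjugation identity: every element of `RMlt(Q)` conjugates `R b` to `R (g b)`. -/
lemma conj_R (C : ConnQuandle Q) {g : Equiv.Perm Q}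
    (hg : g ∈ Subgroup.closure (Set.range C.R)) :
    ∀ b : Q, g * C.R b * g⁻¹ = C.R (g b) := by
  induction hg using Subgroup.closure_induction with
  | mem f hf =>
    obtain ⟨x, rfl⟩ := hf
    intro b
    have key : C.R x * C.R b = C.R (C.R x b) * C.R x := by
      ext a
      simp only [Equiv.Perm.mul_apply]
      rw [C.hR b a, C.auto x a b, ← C.hR]
    rw [key, mul_inv_cancel_right]
  | one => intro b; simp
  | mul g h _ _ ihg ihh =>
    intro b
    calc g * h * C.R b * (g * h)⁻¹ = g * (h * C.R b * h⁻¹) * g⁻¹ := by group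
      _ = g * C.R (h b) * g⁻¹ := by rw [ihh]
      _ = C.R (g (h b)) := ihg _
      _ = C.R ((g * h) b) := by rfl
  | inv g _ ihg =>
    intro b
    have := ihg (g⁻¹ b)
    rw [Equiv.Perm.apply_inv_self] at this
    calc g⁻¹ * C.R b * (g⁻¹)⁻¹ = g⁻¹ * (g * C.R (g⁻¹ b) * g⁻¹) * g := by rw [this]; group
      _ = C.R (g⁻¹ b) := by group

/-- Well-definedness of conjugates of ζ. -/
lemma wd {e : Q} (env : QEnvelope Q e) {g g' : Equiv.Perm Q} (hg : g ∈ env.G)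
    (hg' : g' ∈ env.G) (h : g e = g' e) :
    g * env.ζ * g⁻¹ = g' * env.ζ * g'⁻¹ := by
  have hk : g⁻¹ * g' ∈ env.G := mul_mem (inv_mem hg) hg'
  have hke : (g⁻¹ * g') e = e := by
    simp only [Equiv.Perm.mul_apply, ← h, Equiv.Perm.inv_apply_self]
  have hc := env.central _ hk hke
  have h3 : (g⁻¹ * g') * env.ζ * (g⁻¹ * g')⁻¹ = env.ζ := by
    rw [hc]; group
  have h2 : g' * env.ζ * g'⁻¹ = g * ((g⁻¹ * g') * env.ζ * (g⁻¹ * g')⁻¹) * g⁻¹ := by group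
  rw [h2, h3]

noncomputable def pick {e : Q} (env : QEnvelope Q e) (y : Q) : Equiv.Perm Q :=
  (env.trans y).choose

lemma pick_mem {e : Q} (env : QEnvelope Q e) (y : Q) : pick env y ∈ env.G :=
  (env.trans y).choose_spec.1

lemma pick_e {e : Q} (env : QEnvelope Q e) (y : Q) : pick env y e = y :=
  (env.trans y).choose_spec.2

noncomputable def rmap {e : Q} (env : QEnvelope Q e) (y : Q) : Equiv.Perm Q :=
  pick env y * env.ζ * (pick env y)⁻¹

lemma rmap_spec {e : Q} (env : QEnvelope Q e) {g : Equiv.Perm Q} {y : Q}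
    (hg : g ∈ env.G) (hy : g e = y) : rmap env y = g * env.ζ * g⁻¹ :=
  wd env (pick_mem env y) hg (by rw [pick_e, hy])

lemma rmap_mem {e : Q} (env : QEnvelope Q e) (y : Q) : rmap env y ∈ env.G :=
  mul_mem (mul_mem (pick_mem env y) env.mem) (inv_mem (pick_mem env y))

lemma range_rmap {e : Q} (env : QEnvelope Q e) :
    Set.range (rmap env) = {f : Equiv.Perm Q | ∃ g ∈ env.G, f = g * env.ζ * g⁻¹} := by
  ext f
  constructor
  · rintro ⟨y, rfl⟩
    exact ⟨pick env y, pick_mem env y, rfl⟩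
  · rintro ⟨g, hg, rfl⟩
    exact ⟨g e, rmap_spec env hg rfl⟩

lemma closure_range_rmap {e : Q} (env : QEnvelope Q e) :
    Subgroup.closure (Set.range (rmap env)) = env.G := by
  rw [range_rmap]; exact env.gen

/-- The map from envelopes back to connected quandles. -/
noncomputable def Fmap (e : Q) (env : QEnvelope Q e) : ConnQuandle Q where
  op x y := rmap env y x
  R y := rmap env y
  hR _ _ := rfl
  idem x := by
    have h1 : (pick env x)⁻¹ x = e := by
      rw [Equiv.Perm.inv_eq_iff_eq]
      exact (pick_e env x).symm
    simp only [rmap, Equiv.Perm.mul_apply, h1, env.fix, pick_e]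
  auto x a b := by
    have hmem : rmap env x * pick env b ∈ env.G :=
      mul_mem (rmap_mem env x) (pick_mem env b)
    have hval : (rmap env x * pick env b) e = rmap env x b := by
      simp only [Equiv.Perm.mul_apply, pick_e]
    have key : rmap env (rmap env x b) = rmap env x * rmap env b * (rmap env x)⁻¹ := by
      rw [rmap_spec env hmem hval]; simp only [rmap]; group
    show rmap env x (rmap env b a) = rmap env (rmap env x b) (rmap env x a)
    rw [key]
    simp only [Equiv.Perm.mul_apply, Equiv.Perm.inv_apply_self]
  conn x y := by
    obtain ⟨gx, hgx, hx⟩ := env.trans x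
    obtain ⟨gy, hgy, hy⟩ := env.trans y
    refine ⟨gy * gx⁻¹, ?_, ?_⟩
    · have : Set.range (fun y => rmap env y) = Set.range (rmap env) := rfl
      rw [this, closure_range_rmap]
      exact mul_mem hgy (inv_mem hgx)
    · simp only [Equiv.Perm.mul_apply]
      rw [← hx, Equiv.Perm.inv_apply_self, hy]

/-- The map from connected quandles to envelopes. -/
noncomputable def Emap (e : Q) (C : ConnQuandle Q) : QEnvelope Q e where
  G := Subgroup.closure (Set.range C.R)
  ζ := C.R e
  mem := Subgroup.subset_closure ⟨e, rfl⟩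
  fix := by rw [C.hR]; exact C.idem e
  trans x := C.conn e x
  central g hg hge := by
    have h := conj_R C hg e
    rw [hge] at h
    exact mul_inv_eq_iff_eq_mul.mp h
  gen := by
    apply le_antisymm
    · rw [Subgroup.closure_le]
      rintro f ⟨g, hg, rfl⟩
      exact mul_mem (mul_mem hg (Subgroup.subset_closure ⟨e, rfl⟩)) (inv_mem hg)
    · refine (Subgroup.closure_le _).mpr ?_
      rintro f ⟨x, rfl⟩
      obtain ⟨g, hg, hge⟩ := C.conn e x
      have h : g * C.R e * g⁻¹ = C.R x := by rw [conj_R C hg e, hge]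
      exact h ▸ Subgroup.subset_closure ⟨g, hg, rfl⟩

lemma rmap_Emap (e : Q) (C : ConnQuandle Q) (y : Q) :
    rmap (Emap e C) y = C.R y := by
  have hmem : pick (Emap e C) y ∈ Subgroup.closure (Set.range C.R) :=
    pick_mem (Emap e C) y
  have := conj_R C hmem y
  rw [show rmap (Emap e C) y = pick (Emap e C) y * C.R e * (pick (Emap e C) y)⁻¹ from rfl,
    conj_R C hmem e, pick_e]

lemma left_inv (e : Q) : Function.LeftInverse (Fmap e) (Emap e) := by
  intro C
  apply connQuandle_ext
  · funext x y
    show rmap (Emap e C) y x = C.op x y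
    rw [rmap_Emap, C.hR]
  · funext y
    show rmap (Emap e C) y = C.R y
    exact rmap_Emap e C y

lemma right_inv (e : Q) : Function.RightInverse (Fmap e) (Emap e) := by
  intro env
  apply qEnvelope_ext
  · show Subgroup.closure (Set.range (fun y => rmap env y)) = env.G
    exact closure_range_rmap env
  · show rmap env e = env.ζ
    rw [rmap_spec env (one_mem env.G) (Equiv.Perm.one_apply e)]
    group

end Stmt14Aux

/-- The maps `E : (Q,·) ↦ (RMlt(Q,·), R_e)` and `Q : (G,ζ) ↦ (Q,∘)`,
`x ∘ y = x^{ζ^{ŷ}}`, are mutually inverse bijections between connected quandle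
structures on `(Q,e)` and quandle envelopes on `(Q,e)`. -/
theorem stmt14 (Q : Type*) (e : Q) :
    ∃ (E : ConnQuandle Q → QEnvelope Q e) (F : QEnvelope Q e → ConnQuandle Q),
      (∀ C : ConnQuandle Q,
        (E C).G = Subgroup.closure (Set.range C.R) ∧ (E C).ζ = C.R e) ∧
      (∀ env : QEnvelope Q e, ∀ x y : Q, ∀ g ∈ env.G, g e = y →
        (F env).op x y = (g * env.ζ * g⁻¹) x) ∧
      Function.LeftInverse F E ∧ Function.RightInverse F E := by
  refine ⟨Stmt14Aux.Emap e, Stmt14Aux.Fmap e, fun C => ⟨rfl, rfl⟩, ?_,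
    Stmt14Aux.left_inv e, Stmt14Aux.right_inv e⟩
  intro env x y g hg hy
  show Stmt14Aux.rmap env y x = (g * env.ζ * g⁻¹) x
  rw [Stmt14Aux.rmap_spec env hg hy]
end

section
/- Let A be an abelian group and f ∈ Aut(A). The group of displacements of the affine quandle Aff(A,f) = (A, x*y = f(x) + y − f(y)) is exactly the set of translations x ↦ x + c with c in the image of the endomorphism 1 − f; hence Dis(Aff(A,f)) is isomorphic to Im(1−f). Consequently, Aff(A,f) is connected if and only if 1 − f is surjective. -/
variable {Q : Type*}

/-- Translations by elements of `Im(1-f)` form a subgroup of `Perm A`. -/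
def transSubgroup {A : Type*} [AddCommGroup A] (f : A ≃+ A) : Subgroup (Equiv.Perm A) where
  carrier := {g | ∃ c : A, (∃ z : A, z - f z = c) ∧ ∀ x, g x = x + c}
  one_mem' := ⟨0, ⟨0, by simp⟩, by simp⟩
  mul_mem' := by
    rintro g h ⟨c, ⟨z, hz⟩, hg⟩ ⟨d, ⟨w, hw⟩, hh⟩
    refine ⟨d + c, ⟨w + z, by rw [map_add, ← hz, ← hw]; abel⟩, fun x => ?_⟩
    simp [Equiv.Perm.mul_apply, hh, hg, add_assoc]
  inv_mem' := by
    rintro g ⟨c, ⟨z, hz⟩, hg⟩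
    refine ⟨-c, ⟨-z, by rw [map_neg, ← hz]; abel⟩, fun x => ?_⟩
    have h1 := hg (g⁻¹ x)
    rw [Equiv.Perm.coe_inv, Equiv.apply_symm_apply] at h1
    rw [← sub_eq_add_neg]
    exact eq_sub_of_add_eq h1.symm

theorem dis_eq_trans {A : Type*} [AddCommGroup A] (f : A ≃+ A)
    (R : A → Equiv.Perm A) (hR : ∀ y x, R y x = f x + y - f y) :
    Dis R = transSubgroup f := by
  apply le_antisymm
  · rw [Dis, Subgroup.closure_le]
    rintro g ⟨a, b, rfl⟩
    refine ⟨f.symm b - b + a - f.symm a, ⟨f.symm b - f.symm a, by simp [map_sub]; abel⟩,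
      fun x => ?_⟩
    have : R a (((R a)⁻¹ * R b) x) = R b x := by
      rw [Equiv.Perm.mul_apply, Equiv.Perm.coe_inv, Equiv.apply_symm_apply]
    rw [hR a, hR b] at this
    apply f.injective
    have h2 : f (((R a)⁻¹ * R b) x) = f x + b - f b + f a - a :=
      eq_sub_of_add_eq (eq_add_of_sub_eq this)
    rw [h2]
    simp [map_add, map_sub]
    abel
  · intro g hg
    obtain ⟨c, ⟨z, hz⟩, hgx⟩ := hg
    have hgen : g = (R 0)⁻¹ * R (f z) := by
      ext x
      rw [Equiv.Perm.mul_apply, Equiv.Perm.inv_def, Equiv.eq_symm_apply, hR, hR, hgx, ← hz]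
      simp [map_add, map_sub]
      abel
    rw [hgen]
    exact Subgroup.subset_closure ⟨0, f z, rfl⟩


/-- The displacement group of the affine quandle `Aff(A,f)` consists exactly of the
translations by elements of `Im(1-f)`, is isomorphic to `Im(1-f)`, and `Aff(A,f)` is
connected iff `1 - f` is surjective. -/
theorem stmt16 {A : Type*} [AddCommGroup A] (f : A ≃+ A)
    (R : A → Equiv.Perm A)
    (hR : ∀ y x, R y x = f x + y - f y) :
    ((Dis R : Set (Equiv.Perm A)) =
      {g | ∃ c : A, (∃ z : A, z - f z = c) ∧ ∀ x, g x = x + c}) ∧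
    Nonempty (Additive (Dis R) ≃+ (AddMonoidHom.id A - f.toAddMonoidHom).range) ∧
    ((∀ x y : A, ∃ g ∈ Dis R, g x = y) ↔ Function.Surjective fun x : A => x - f x) := by
  have hset : (Dis R : Set (Equiv.Perm A)) =
      {g | ∃ c : A, (∃ z : A, z - f z = c) ∧ ∀ x, g x = x + c} := by
    rw [dis_eq_trans f R hR]; rfl
  have hmem : ∀ g : Equiv.Perm A,
      g ∈ Dis R ↔ ∃ c : A, (∃ z, z - f z = c) ∧ ∀ x, g x = x + c := by
    intro g
    rw [← SetLike.mem_coe, hset]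
    rfl
  have hrange : ∀ c : A, c ∈ (AddMonoidHom.id A - f.toAddMonoidHom).range ↔
      ∃ z, z - f z = c := by
    intro c
    simp [AddMonoidHom.mem_range, AddMonoidHom.sub_apply]
  have hform : ∀ g : Dis R, ∀ x, (g : Equiv.Perm A) x = x + (g : Equiv.Perm A) 0 := by
    intro g x
    obtain ⟨c, _, hgx⟩ := (hmem g).mp g.2
    rw [hgx x, hgx 0, zero_add]
  have hval : ∀ g : Dis R, ∃ z, z - f z = (g : Equiv.Perm A) 0 := by
    intro g
    obtain ⟨c, ⟨z, hz⟩, hgx⟩ := (hmem g).mp g.2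
    exact ⟨z, by rw [hz, hgx 0, zero_add]⟩
  have hmemtrans : ∀ c : A, (∃ z, z - f z = c) → Equiv.addRight c ∈ Dis R := by
    intro c hc
    exact (hmem _).mpr ⟨c, hc, fun x => rfl⟩
  refine ⟨hset, ⟨⟨⟨fun g => ⟨((Additive.toMul g : Dis R) : Equiv.Perm A) 0,
      (hrange _).mpr (hval _)⟩,
      fun c => Additive.ofMul (⟨Equiv.addRight c.1, hmemtrans c.1 ((hrange c.1).mp c.2)⟩ : Dis R),
      ?_, ?_⟩, ?_⟩⟩, ?_⟩
  · intro g
    apply Additive.toMul.injective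
    apply Subtype.ext
    apply Equiv.ext
    intro x
    exact (hform (Additive.toMul g) x).symm
  · intro c
    exact Subtype.ext (zero_add c.1)
  · intro g h
    apply Subtype.ext
    show ((Additive.toMul (g + h) : Dis R) : Equiv.Perm A) 0 =
      ((Additive.toMul g : Dis R) : Equiv.Perm A) 0 + ((Additive.toMul h : Dis R) : Equiv.Perm A) 0
    have : (Additive.toMul (g + h) : Dis R) = Additive.toMul g * Additive.toMul h := rfl
    rw [this]
    push_cast [Subgroup.coe_mul]
    simp only [Function.comp_apply]
    rw [hform (Additive.toMul g)]
    exact add_comm _ _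
  · constructor
    · intro h y
      obtain ⟨g, hg, hgy⟩ := h 0 y
      obtain ⟨c, ⟨z, hz⟩, hgx⟩ := (hmem g).mp hg
      exact ⟨z, by show z - f z = y; rw [hz, ← hgy, hgx 0, zero_add]⟩
    · intro hs x y
      obtain ⟨z, hz⟩ := hs (y - x)
      refine ⟨Equiv.addRight (y - x), hmemtrans _ ⟨z, hz⟩, ?_⟩
      simp
end
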